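/- arXiv:2308.03025 — 2 statements merged into one kernel-verified Lean document; each statement's English description precedes it below -/
import Mathlib

section
/- Let (R, δ) be a simple δ-ring (its only δ-ideals are 0 and R) containing ℚ. Then R is an integral domain. -/
/-- A simple δ-ring containing ℚ is an integral domain. -/
theorem simple_delta_ring_isDomain (R : Type*) [CommRing R] [Nontrivial R] [Algebra ℚ R]
    (δ : R → R)
    (hadd : ∀ a b : R, δ (a + b) = δ a + δ b)
    (hmul : ∀ a b : R, δ (a * b) = δ a * b + a * δ b)
    (hsimple : ∀ I : Ideal R, (∀ x ∈ I, δ x ∈ I) → I = ⊥ ∨ I = ⊤) :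
    IsDomain R := by
  -- basic facts about δ
  have hone : δ 1 = 0 := by
    have h := hmul 1 1
    rw [mul_one, one_mul] at h
    linear_combination -h
  have hzero : δ 0 = 0 := by
    have h := hadd 0 0
    rw [add_zero] at h
    linear_combination -h
  -- units from ℚ
  have hunit : ∀ n : ℕ, IsUnit ((n + 1 : ℕ) : R) := by
    intro n
    have h1 : ((n + 1 : ℕ) : R) = algebraMap ℚ R ((n + 1 : ℕ) : ℚ) := by
      simp
    rw [h1]
    exact (IsUnit.map (algebraMap ℚ R) (isUnit_iff_ne_zero.mpr (by positivity)))
  -- power rule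
  have hpow : ∀ (n : ℕ) (x : R), δ (x ^ (n + 1)) = ((n + 1 : ℕ) : R) * x ^ n * δ x := by
    intro n
    induction n with
    | zero => intro x; simp
    | succ m ih =>
      intro x
      have : δ (x ^ (m + 2)) = δ (x ^ (m + 1) * x) := by ring_nf
      rw [this, hmul, ih]
      push_cast
      ring
  -- descent: x^(m+1) * (δ x)^k = 0 → x^m * (δ x)^(k+2) = 0
  have hstep : ∀ (m k : ℕ) (x : R), x ^ (m + 1) * (δ x) ^ k = 0 →
      x ^ m * (δ x) ^ (k + 2) = 0 := by
    intro m k x h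
    have hd : δ (x ^ (m + 1) * (δ x) ^ k) = 0 := by rw [h, hzero]
    rw [hmul, hpow] at hd
    -- multiply by δ x
    have hd2 : δ x * δ (x ^ (m + 1) * (δ x) ^ k) = 0 := by rw [h, hzero]; ring
    rw [hmul, hpow] at hd2
    -- second term: δ x * (x ^ (m+1) * δ ((δ x)^k)) contains x^(m+1) * (δ x)^k ? No.
    -- handle k = 0 and k ≥ 1 separately
    match k with
    | 0 =>
      simp [hone] at hd2 ⊢
      have h3 : ((m + 1 : ℕ) : R) * (x ^ m * δ x ^ 2) = 0 := by
        push_cast at hd2 ⊢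
        linear_combination hd2
      have := (hunit m).mul_right_eq_zero.mp h3
      exact this
    | j + 1 =>
      rw [hpow] at hd2
      have h3 : ((m + 1 : ℕ) : R) * (x ^ m * δ x ^ (j + 1 + 2)) = 0 := by
        have hxk : x ^ (m + 1) * δ x ^ (j + 1) = 0 := h
        push_cast at hd2 ⊢
        linear_combination hd2 - (((j:R)+1) * δ (δ x)) * hxk
      exact (hunit m).mul_right_eq_zero.mp h3
  -- full descent
  have hdesc : ∀ (m k : ℕ) (x : R), x ^ m * (δ x) ^ k = 0 → (δ x) ^ (2 * m + k) = 0 := by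
    intro m
    induction m with
    | zero => intro k x h; simpa using h
    | succ p ih =>
      intro k x h
      have h2 := hstep p k x h
      have := ih (k + 2) x h2
      have he : 2 * p + (k + 2) = 2 * (p + 1) + k := by ring
      rwa [he] at this
  have hnilδ : ∀ x : R, IsNilpotent x → IsNilpotent (δ x) := by
    rintro x ⟨n, hn⟩
    refine ⟨2 * n + 0, hdesc n 0 x ?_⟩
    simp [hn]
  -- nilradical is a δ-ideal, hence ⊥
  have hred : ∀ x : R, IsNilpotent x → x = 0 := by
    have := hsimple (nilradical R) (by
      intro x hx
      exact (mem_nilradical).mpr (hnilδ x ((mem_nilradical).mp hx)))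
    rcases this with h | h
    · intro x hx
      have : x ∈ nilradical R := mem_nilradical.mpr hx
      rw [h] at this
      simpa using this
    · exfalso
      have : (1 : R) ∈ nilradical R := by rw [h]; trivial
      obtain ⟨n, hn⟩ := mem_nilradical.mp this
      rw [one_pow] at hn
      exact one_ne_zero hn
  -- no zero divisors
  have hnzd : ∀ a b : R, a * b = 0 → a = 0 ∨ b = 0 := by
    intro a b hab
    by_cases hb : b = 0
    · exact Or.inr hb
    refine Or.inl ?_
    set I : Ideal R :=
      { carrier := {x | x * b = 0}
        add_mem' := by
          intro x y hx hy
          simp only [Set.mem_setOf_eq] at *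
          rw [add_mul, hx, hy, add_zero]
        zero_mem' := by simp
        smul_mem' := by
          intro c x hx
          simp only [Set.mem_setOf_eq, smul_eq_mul] at *
          rw [mul_assoc, hx, mul_zero] } with hI
    have hmem : ∀ x : R, x ∈ I ↔ x * b = 0 := fun x => Iff.rfl
    have hIδ : ∀ x ∈ I, δ x ∈ I := by
      intro x hx
      rw [hmem] at hx ⊢
      have h1 : δ x * b + x * δ b = 0 := by
        have := hmul x b
        rw [hx, hzero] at this
        linear_combination -this
      have hsq : (δ x * b) ^ 2 = 0 := by
        have h2 : δ x * b = -(x * δ b) := by linear_combination h1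
        calc (δ x * b) ^ 2 = (δ x * b) * (δ x * b) := sq (δ x * b)
          _ = (δ x * b) * (-(x * δ b)) := by rw [← h2]
          _ = -(δ x * δ b) * (x * b) := by ring
          _ = 0 := by rw [hx]; ring
      exact hred _ ⟨2, hsq⟩
    rcases hsimple I hIδ with h | h
    · have : a ∈ I := (hmem a).mpr hab
      rw [h] at this
      simpa using this
    · exfalso
      have : (1 : R) ∈ I := by rw [h]; trivial
      rw [hmem] at this
      exact hb (by simpa using this)
  have : NoZeroDivisors R :=
    ⟨fun {a b} h => hnzd a b h⟩
  exact NoZeroDivisors.to_isDomain R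
end

section
/- Let F be a field of characteristic 0 with derivation δ, and let D: Mₙ(F) → Mₙ(F) be an additive map satisfying the Leibniz rule D(xy) = D(x)y + xD(y) and D(cI) = δ(c)I for c ∈ F. Then there exists a matrix P ∈ Mₙ(F) such that D(x) = x' + Px - xP for all x ∈ Mₙ(F), where x' denotes entrywise derivation. Moreover P may be chosen with trace zero. -/
/-!
Subtracting the entrywise derivative turns `D` into a derivation `E` that kills the scalars,
hence an `F`-linear derivation of `Mₙ(F)`. Fixing an index `i₀`, the matrix
`P = ∑ₖ E(e_{k i₀}) e_{i₀ k}` satisfies `E(e_{ij}) = P e_{ij} - e_{ij} P`: this follows from the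
Leibniz rule applied to `e_{ij} e_{k i₀}` together with `∑ₖ e_{kk} = 1`. Both sides being linear,
`E` is the inner derivation of `P`, and replacing `P` by `P - (tr P / n) • 1` makes it traceless
without changing the commutator.
-/

theorem map_smul_of_leibniz {R A : Type*} [NonAssocSemiring A] [SMul R A] [IsScalarTower R A A]
    (E : A → A) (hE : ∀ x y, E (x * y) = E x * y + x * E y) (hscalar : ∀ c : R, E (c • 1) = 0)
    (c : R) (x : A) : E (c • x) = c • E x := by
  rw [← smul_one_mul, hE, hscalar, zero_mul, zero_add, smul_one_mul]

namespace Matrix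

theorem map_mul_of_leibniz {l m n R : Type*} [Fintype m] [NonUnitalNonAssocSemiring R]
    (δ : R →+ R) (hδ : ∀ a b, δ (a * b) = δ a * b + a * δ b)
    (x : Matrix l m R) (y : Matrix m n R) :
    (x * y).map δ = x.map δ * y + x * y.map δ := by
  ext i j
  simp only [map_apply, mul_apply, add_apply, map_sum, hδ, Finset.sum_add_distrib]

section CommRing

variable {R n : Type*} [CommRing R] [Fintype n] [DecidableEq n]

def derivationGenerator (E : Matrix n n R →ₗ[R] Matrix n n R) (i₀ : n) : Matrix n n R :=
  ∑ k, E (single k i₀ 1) * single i₀ k 1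

theorem derivationGenerator_mul_single (E : Matrix n n R →ₗ[R] Matrix n n R) (i₀ i j : n) :
    derivationGenerator E i₀ * single i j 1 = E (single i i₀ 1) * single i₀ j 1 := by
  rw [derivationGenerator, Finset.sum_mul, Fintype.sum_eq_single i]
  · rw [mul_assoc, single_mul_single_same, one_mul]
  · intro k hk
    rw [mul_assoc, single_mul_single_of_ne (h := hk), mul_zero]

theorem single_mul_derivationGenerator (E : Matrix n n R →ₗ[R] Matrix n n R)
    (hE : ∀ x y, E (x * y) = E x * y + x * E y) (i₀ i j : n) :
    single i j 1 * derivationGenerator E i₀ =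
      E (single i i₀ 1) * single i₀ j 1 - E (single i j 1) := by
  have hterm : ∀ k, single i j 1 * (E (single k i₀ 1) * single i₀ k 1) =
      E (single i j 1 * single k i₀ 1) * single i₀ k 1 - E (single i j 1) * single k k 1 := by
    intro k
    rw [hE, add_mul, mul_assoc (E _), single_mul_single_same, one_mul, mul_assoc]
    abel
  rw [derivationGenerator, Finset.mul_sum, Finset.sum_congr rfl fun k _ => hterm k,
    Finset.sum_sub_distrib, ← Finset.mul_sum, sum_single_one, mul_one, Fintype.sum_eq_single j]
  · rw [single_mul_single_same, one_mul]
  · intro k hk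
    rw [single_mul_single_of_ne (h := Ne.symm hk), map_zero, zero_mul]

theorem exists_eq_commutator_of_leibniz (E : Matrix n n R →ₗ[R] Matrix n n R)
    (hE : ∀ x y, E (x * y) = E x * y + x * E y) : ∃ P, ∀ x, E x = P * x - x * P := by
  rcases isEmpty_or_nonempty n with _ | ⟨⟨i₀⟩⟩
  · exact ⟨0, fun x => Subsingleton.elim _ _⟩
  refine ⟨derivationGenerator E i₀, fun x => ?_⟩
  suffices E = LinearMap.mulLeft R (derivationGenerator E i₀) -
      LinearMap.mulRight R (derivationGenerator E i₀) from LinearMap.congr_fun this x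
  refine ext_linearMap (h := fun i j => LinearMap.ext_ring ?_)
  simp [derivationGenerator_mul_single, single_mul_derivationGenerator E hE]

end CommRing

section Field

variable {K n : Type*} [Field K] [CharZero K] [Fintype n] [DecidableEq n]

theorem exists_trace_eq_zero_commutator_eq (P : Matrix n n K) :
    ∃ Q, trace Q = 0 ∧ ∀ x, Q * x - x * Q = P * x - x * P := by
  rcases isEmpty_or_nonempty n with _ | _
  · exact ⟨P, by simp [trace], fun x => rfl⟩
  refine ⟨P - (trace P / Fintype.card n) • 1, ?_, fun x => ?_⟩
  · have hcard : (Fintype.card n : K) ≠ 0 := Nat.cast_ne_zero.mpr Fintype.card_ne_zero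
    rw [trace_sub, trace_smul, trace_one, smul_eq_mul, div_mul_cancel₀ _ hcard, sub_self]
  · rw [sub_mul, mul_sub, smul_one_mul, mul_smul_one]
    abel

theorem exists_trace_eq_zero_and_eq_commutator_of_leibniz (E : Matrix n n K →ₗ[K] Matrix n n K)
    (hE : ∀ x y, E (x * y) = E x * y + x * E y) :
    ∃ P, trace P = 0 ∧ ∀ x, E x = P * x - x * P := by
  obtain ⟨P, hP⟩ := exists_eq_commutator_of_leibniz E hE
  obtain ⟨Q, hQ, hQP⟩ := exists_trace_eq_zero_commutator_eq P
  exact ⟨Q, hQ, fun x => (hP x).trans (hQP x).symm⟩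

end Field

end Matrix

/-- Every derivation on Mₙ(F) compatible with δ on scalars is of the form
x ↦ x' + Px - xP for some traceless matrix P. -/
theorem derivation_on_matrix_ring_is_inner (F : Type*) [Field F] [CharZero F] (n : ℕ)
    (δ : F → F)
    (hadd : ∀ a b : F, δ (a + b) = δ a + δ b)
    (hmul : ∀ a b : F, δ (a * b) = δ a * b + a * δ b)
    (D : Matrix (Fin n) (Fin n) F → Matrix (Fin n) (Fin n) F)
    (hDadd : ∀ x y, D (x + y) = D x + D y)
    (hDmul : ∀ x y, D (x * y) = D x * y + x * D y)
    (hDscalar : ∀ c : F, D (c • (1 : Matrix (Fin n) (Fin n) F)) = δ c • 1) :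
    ∃ P : Matrix (Fin n) (Fin n) F, Matrix.trace P = 0 ∧
      ∀ x, D x = x.map δ + P * x - x * P := by
  let δ' : F →+ F := AddMonoidHom.mk' δ hadd
  let E : Matrix (Fin n) (Fin n) F →+ Matrix (Fin n) (Fin n) F :=
    AddMonoidHom.mk' D hDadd - δ'.mapMatrix
  have hE : ∀ x y, E (x * y) = E x * y + x * E y := by
    intro x y
    simp only [E, AddMonoidHom.sub_apply, AddMonoidHom.mk'_apply, AddMonoidHom.mapMatrix_apply,
      hDmul, Matrix.map_mul_of_leibniz δ' hmul, sub_mul, mul_sub]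
    abel
  have hEscalar : ∀ c : F, E (c • 1) = 0 := by
    intro c
    have hmap : (c • (1 : Matrix (Fin n) (Fin n) F)).map δ' = δ c • 1 := by
      rw [Matrix.smul_one_eq_diagonal, Matrix.smul_one_eq_diagonal,
        Matrix.diagonal_map (map_zero δ')]
      rfl
    simp only [E, AddMonoidHom.sub_apply, AddMonoidHom.mk'_apply, AddMonoidHom.mapMatrix_apply,
      hDscalar, hmap, sub_self]
  obtain ⟨P, htrace, hP⟩ := Matrix.exists_trace_eq_zero_and_eq_commutator_of_leibniz
    { E with map_smul' := map_smul_of_leibniz E hE hEscalar } hE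
  refine ⟨P, htrace, fun x => ?_⟩
  rw [add_sub_assoc, ← hP x]
  simp [E, δ']
end
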